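/- arXiv:2303.11264 — 3 statements merged into one kernel-verified Lean document; each statement's English description precedes it below -/
import Mathlib

section
/- The matrix Z_h := (I - Z_{AB}†·Z_{AB})_{Nx+1:,:} (i.e., I - Z_{AB}†Z_{AB} with its first Nx rows removed) has rank NuT. -/
open Matrix

/-- Moore–Penrose pseudoinverse conditions. -/
def IsMoorePenrose {m n : Type*} [Fintype m] [Fintype n]
    (M : Matrix m n ℝ) (Mp : Matrix n m ℝ) : Prop :=
  M * Mp * M = M ∧ Mp * M * Mp = Mp ∧ (M * Mp)ᵀ = M * Mp ∧ (Mp * M)ᵀ = Mp * M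

/-- Block-downshift matrix: identity `Nx × Nx` blocks on the first block subdiagonal. -/
def dshift (Nx T : ℕ) : Matrix (Fin (T+1) × Fin Nx) (Fin (T+1) × Fin Nx) ℝ :=
  Matrix.of fun p q => if p.1.val = q.1.val + 1 ∧ p.2 = q.2 then 1 else 0

/-- Block diagonal `Â = blkdiag(A, …, A)` with `T+1` copies. -/
def Ahat {Nx : ℕ} (A : Matrix (Fin Nx) (Fin Nx) ℝ) (T : ℕ) :
    Matrix (Fin (T+1) × Fin Nx) (Fin (T+1) × Fin Nx) ℝ :=
  Matrix.of fun p q => if p.1 = q.1 then A p.2 q.2 else 0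

/-- Block diagonal `B̂ = blkdiag(B, …, B)` with `T` copies, embedded so that `Z * B̂`
has the right dimensions `Nx(T+1) × NuT`. -/
def Bhat {Nx Nu : ℕ} (B : Matrix (Fin Nx) (Fin Nu) ℝ) (T : ℕ) :
    Matrix (Fin (T+1) × Fin Nx) (Fin T × Fin Nu) ℝ :=
  Matrix.of fun p q => if p.1.val = q.1.val then B p.2 q.2 else 0

/-- `Z_{AB} := [I - Z·Â, -Z·B̂]`. -/
def ZAB {Nx Nu : ℕ} (A : Matrix (Fin Nx) (Fin Nx) ℝ) (B : Matrix (Fin Nx) (Fin Nu) ℝ)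
    (T : ℕ) : Matrix (Fin (T+1) × Fin Nx) ((Fin (T+1) × Fin Nx) ⊕ (Fin T × Fin Nu)) ℝ :=
  Matrix.fromCols (1 - dshift Nx T * Ahat A T) (-(dshift Nx T * Bhat B T))

/-- The right-hand side `[I; 0]`: identity in the first `Nx` rows (block `t = 0`),
zeros below. -/
def rhsIO (Nx T : ℕ) : Matrix (Fin (T+1) × Fin Nx) (Fin Nx) ℝ :=
  Matrix.of fun p j => if p.1 = 0 ∧ p.2 = j then 1 else 0

/-- Remove the first `Nx` rows (the block `t = 0` of the state part) of a matrix whose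
rows are indexed like the rows of `Φ`; state block `t` of the result corresponds to
block `t+1` of the input. -/
def tail2 {Nx Nu T : ℕ} {c : Type*}
    (M : Matrix ((Fin (T+1) × Fin Nx) ⊕ (Fin T × Fin Nu)) c ℝ) :
    Matrix ((Fin T × Fin Nx) ⊕ (Fin T × Fin Nu)) c ℝ :=
  Matrix.of fun p j =>
    match p with
    | Sum.inl (t, i) => M (Sum.inl (t.succ, i)) j
    | Sum.inr q => M (Sum.inr q) j

/-- Trajectory set `𝒴(x0)`: trajectories `y = Φ_{Nx+1:,:} x0` over all `Φ` satisfying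
the achievability constraint `Z_{AB} Φ = [I;0]`. -/
def trajSet {Nx Nu : ℕ} (A : Matrix (Fin Nx) (Fin Nx) ℝ)
    (B : Matrix (Fin Nx) (Fin Nu) ℝ) (T : ℕ) (x0 : Fin Nx → ℝ) :
    Set ((Fin T × Fin Nx) ⊕ (Fin T × Fin Nu) → ℝ) :=
  {y | ∃ Φ : Matrix ((Fin (T+1) × Fin Nx) ⊕ (Fin T × Fin Nu)) (Fin Nx) ℝ,
        ZAB A B T * Φ = rhsIO Nx T ∧ y = tail2 Φ *ᵥ x0}

section ZhRankAux

lemma dshift_mul_row_zero' {Nx T : ℕ} {c : Type*}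
    (Y : Matrix (Fin (T+1) × Fin Nx) c ℝ) (i : Fin Nx) (q : c) :
    (dshift Nx T * Y) ((0 : Fin (T+1)), i) q = 0 := by
  rw [Matrix.mul_apply]
  apply Finset.sum_eq_zero
  intro r _
  have h0 : dshift Nx T ((0 : Fin (T+1)), i) r = 0 := by
    simp only [dshift, Matrix.of_apply]
    rw [if_neg]
    rintro ⟨h, -⟩
    simp at h
  rw [h0, zero_mul]

lemma x_entry_zero' {Nx T : ℕ} (A : Matrix (Fin Nx) (Fin Nx) ℝ)
    (p q : Fin (T+1) × Fin Nx) (h : p.1.val ≠ q.1.val + 1) :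
    (dshift Nx T * Ahat A T) p q = 0 := by
  rw [Matrix.mul_apply]
  apply Finset.sum_eq_zero
  intro s _
  by_cases h1 : p.1.val = s.1.val + 1 ∧ p.2 = s.2
  · have h2 : ¬ s.1 = q.1 := by
      intro h2
      apply h
      rw [← h2]
      exact h1.1
    have hA : Ahat A T s q = 0 := by
      simp only [Ahat, Matrix.of_apply, if_neg h2]
    rw [hA, mul_zero]
  · simp only [dshift, Matrix.of_apply, if_neg h1, zero_mul]

lemma xpow_entry_zero' {Nx T : ℕ} (A : Matrix (Fin Nx) (Fin Nx) ℝ) :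
    ∀ (k : ℕ) (p q : Fin (T+1) × Fin Nx), p.1.val ≠ q.1.val + k →
      ((dshift Nx T * Ahat A T) ^ k) p q = 0 := by
  intro k
  induction k with
  | zero =>
    intro p q h
    rw [pow_zero]
    exact Matrix.one_apply_ne (fun he => h (by rw [he]; omega))
  | succ k ih =>
    intro p q h
    rw [pow_succ, Matrix.mul_apply]
    apply Finset.sum_eq_zero
    intro r _
    by_cases hr : p.1.val = r.1.val + k
    · rw [x_entry_zero' A r q (by omega), mul_zero]
    · rw [ih p r hr, zero_mul]

lemma xpow_top' {Nx T : ℕ} (A : Matrix (Fin Nx) (Fin Nx) ℝ) :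
    (dshift Nx T * Ahat A T) ^ (T+1) = 0 := by
  ext p q
  rw [Matrix.zero_apply]
  apply xpow_entry_zero'
  have := p.1.isLt
  omega

end ZhRankAux

/-- `Z_h := (I - Z_{AB}†Z_{AB})_{Nx+1:,:}` has rank `NuT`. -/
theorem Zh_rank {Nx Nu T : ℕ}
    (A : Matrix (Fin Nx) (Fin Nx) ℝ) (B : Matrix (Fin Nx) (Fin Nu) ℝ)
    (Zdag : Matrix ((Fin (T+1) × Fin Nx) ⊕ (Fin T × Fin Nu)) (Fin (T+1) × Fin Nx) ℝ)
    (hMP : IsMoorePenrose (ZAB A B T) Zdag) :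
    (tail2 (1 - Zdag * ZAB A B T)).rank = Nu * T := by
  obtain ⟨h1, h2, h3, h4⟩ := hMP
  set x : Matrix (Fin (T+1) × Fin Nx) (Fin (T+1) × Fin Nx) ℝ := dshift Nx T * Ahat A T with hxdef
  set M : Matrix (Fin (T+1) × Fin Nx) (Fin (T+1) × Fin Nx) ℝ := 1 - x with hMdef
  set C : Matrix (Fin (T+1) × Fin Nx) (Fin T × Fin Nu) ℝ := -(dshift Nx T * Bhat B T) with hCdef
  set W : Matrix (Fin (T+1) × Fin Nx) (Fin (T+1) × Fin Nx) ℝ :=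
    ∑ k ∈ Finset.range (T+1), x ^ k with hWdef
  have hZ : ZAB A B T = Matrix.fromCols M C := rfl
  -- geometric series inverse
  have hWM : W * M = 1 := by
    have h := geom_sum_mul x (T+1)
    rw [xpow_top'] at h
    have he : W * M = -(W * (x - 1)) := by
      rw [hMdef]
      noncomm_ring
    rw [he, h, zero_sub, neg_neg]
  have hMW : M * W = 1 := by
    have h := mul_geom_sum x (T+1)
    rw [xpow_top'] at h
    have he : M * W = -((x - 1) * W) := by
      rw [hMdef]
      noncomm_ring
    rw [he, h, zero_sub, neg_neg]
  -- right inverse of Z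
  have hZright : ZAB A B T * Matrix.fromRows W (0 : Matrix (Fin T × Fin Nu) _ ℝ) = 1 := by
    rw [hZ, Matrix.fromCols_mul_fromRows, hMW, Matrix.mul_zero, add_zero]
  set Pm : Matrix ((Fin (T+1) × Fin Nx) ⊕ (Fin T × Fin Nu))
      ((Fin (T+1) × Fin Nx) ⊕ (Fin T × Fin Nu)) ℝ := 1 - Zdag * ZAB A B T with hPmdef
  have hZP : ZAB A B T * Pm = 0 := by
    rw [hPmdef, Matrix.mul_sub, Matrix.mul_one, ← Matrix.mul_assoc, h1, sub_self]
  have hPZt : Pm * (ZAB A B T)ᵀ = 0 := by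
    have key : Zdag * ZAB A B T * (ZAB A B T)ᵀ = (ZAB A B T)ᵀ := by
      calc Zdag * ZAB A B T * (ZAB A B T)ᵀ
          = (Zdag * ZAB A B T)ᵀ * (ZAB A B T)ᵀ := by rw [h4]
        _ = (ZAB A B T * (Zdag * ZAB A B T))ᵀ := (Matrix.transpose_mul _ _).symm
        _ = (ZAB A B T)ᵀ := by rw [← Matrix.mul_assoc, h1]
    rw [hPmdef, Matrix.sub_mul, Matrix.one_mul, key, sub_self]
  -- rows (0, i) of Pm vanish
  have hrowzero : ∀ (i : Fin Nx) (j), Pm (Sum.inl ((0 : Fin (T+1)), i)) j = 0 := by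
    intro i j
    have hsymm : Pmᵀ = Pm := by
      rw [hPmdef, Matrix.transpose_sub, Matrix.transpose_one, h4]
    set e0 : (Fin (T+1) × Fin Nx) → ℝ := Pi.single ((0 : Fin (T+1)), i) 1 with he0
    have hWC : ∀ q, (W * C) ((0 : Fin (T+1)), i) q = 0 := by
      intro q
      rw [hWdef, Matrix.sum_mul, Matrix.sum_apply]
      apply Finset.sum_eq_zero
      intro k _
      match k with
      | 0 =>
        rw [pow_zero, Matrix.one_mul, hCdef, Matrix.neg_apply, dshift_mul_row_zero', neg_zero]
      | Nat.succ k =>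
        have he : x ^ (k+1) * C = dshift Nx T * (Ahat A T * (x ^ k * C)) := by
          rw [pow_succ', hxdef, Matrix.mul_assoc, Matrix.mul_assoc]
        rw [he]
        exact dshift_mul_row_zero' _ i q
    have hu : (ZAB A B T)ᵀ *ᵥ (Wᵀ *ᵥ e0) =
        Pi.single (Sum.inl ((0 : Fin (T+1)), i)) (1 : ℝ) := by
      rw [hZ, Matrix.transpose_fromCols, Matrix.fromRows_mulVec]
      have hm : Mᵀ *ᵥ (Wᵀ *ᵥ e0) = e0 := by
        rw [Matrix.mulVec_mulVec, ← Matrix.transpose_mul, hWM, Matrix.transpose_one,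
          Matrix.one_mulVec]
      have hc : Cᵀ *ᵥ (Wᵀ *ᵥ e0) = 0 := by
        rw [Matrix.mulVec_mulVec, ← Matrix.transpose_mul, he0, Matrix.mulVec_single]
        funext q
        rw [MulOpposite.op_one, one_smul]
        exact hWC q
      rw [hm, hc]
      funext c
      cases c with
      | inl r =>
        by_cases hr : r = ((0 : Fin (T+1)), i)
        · subst hr; simp [he0]
        · simp [he0, Pi.single_apply, hr]
      | inr q => simp [Pi.single_apply]
    have hcol : Pm *ᵥ Pi.single (Sum.inl ((0 : Fin (T+1)), i)) (1 : ℝ) = 0 := by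
      rw [← hu, Matrix.mulVec_mulVec, hPZt, Matrix.zero_mulVec]
    have hval := congrFun hcol j
    simp only [Matrix.mulVec_single, mul_one, Pi.zero_apply] at hval
    calc Pm (Sum.inl ((0 : Fin (T+1)), i)) j = Pmᵀ j (Sum.inl ((0 : Fin (T+1)), i)) := rfl
      _ = Pm j (Sum.inl ((0 : Fin (T+1)), i)) := by rw [hsymm]
      _ = 0 := by simpa using hval
  -- range of Pm = kernel of Z
  have hVK : LinearMap.range Pm.mulVecLin = LinearMap.ker (ZAB A B T).mulVecLin := by
    apply le_antisymm
    · rintro v ⟨xv, rfl⟩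
      rw [LinearMap.mem_ker, Matrix.mulVecLin_apply, Matrix.mulVecLin_apply,
        Matrix.mulVec_mulVec, hZP, Matrix.zero_mulVec]
    · intro v hv
      rw [LinearMap.mem_ker, Matrix.mulVecLin_apply] at hv
      refine ⟨v, ?_⟩
      rw [Matrix.mulVecLin_apply, hPmdef, Matrix.sub_mulVec, Matrix.one_mulVec,
        ← Matrix.mulVec_mulVec, hv, Matrix.mulVec_zero, sub_zero]
  -- rank computations
  have hsurj : Function.Surjective (ZAB A B T).mulVecLin := by
    intro y
    refine ⟨Matrix.fromRows W (0 : Matrix (Fin T × Fin Nu) _ ℝ) *ᵥ y, ?_⟩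
    rw [Matrix.mulVecLin_apply, Matrix.mulVec_mulVec, hZright, Matrix.one_mulVec]
  have hrangeZ : Module.finrank ℝ (LinearMap.range (ZAB A B T).mulVecLin) = (T+1) * Nx := by
    rw [LinearMap.range_eq_top.mpr hsurj, finrank_top, Module.finrank_fintype_fun_eq_card]
    simp
  have hRN := (ZAB A B T).mulVecLin.finrank_range_add_finrank_ker
  rw [Module.finrank_fintype_fun_eq_card] at hRN
  have hcard : Fintype.card ((Fin (T+1) × Fin Nx) ⊕ (Fin T × Fin Nu)) = (T+1) * Nx + T * Nu := by
    simp
  rw [hcard, hrangeZ] at hRN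
  have hker : Module.finrank ℝ (LinearMap.ker (ZAB A B T).mulVecLin) = T * Nu := by omega
  -- tail2 as composition with funLeft
  set g : (Fin T × Fin Nx) ⊕ (Fin T × Fin Nu) → (Fin (T+1) × Fin Nx) ⊕ (Fin T × Fin Nu) :=
    Sum.elim (fun ti => Sum.inl (ti.1.succ, ti.2)) Sum.inr with hgdef
  have htail : (tail2 Pm).mulVecLin = (LinearMap.funLeft ℝ ℝ g).comp Pm.mulVecLin := by
    apply LinearMap.ext
    intro xv
    funext p
    rcases p with ⟨t, i⟩ | q <;> rfl
  -- injectivity on the range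
  set V : Submodule ℝ (((Fin (T+1) × Fin Nx) ⊕ (Fin T × Fin Nu)) → ℝ) :=
    LinearMap.range Pm.mulVecLin with hVdef
  have hkerV : ∀ v ∈ V, (∀ p, v (g p) = 0) → v = 0 := by
    rintro v ⟨xv, rfl⟩ h0
    funext c
    rcases c with ⟨s, i⟩ | q
    · by_cases hs : s = 0
      · subst hs
        show (Pm *ᵥ xv) (Sum.inl ((0 : Fin (T+1)), i)) = 0
        rw [Matrix.mulVec]
        apply Finset.sum_eq_zero
        intro j _
        simp [hrowzero i j]
      · have hgp : g (Sum.inl (s.pred hs, i)) = Sum.inl (s, i) := by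
          simp [hgdef, Fin.succ_pred]
        have := h0 (Sum.inl (s.pred hs, i))
        rwa [hgp] at this
    · exact h0 (Sum.inr q)
  set f : V →ₗ[ℝ] (((Fin T × Fin Nx) ⊕ (Fin T × Fin Nu)) → ℝ) :=
    (LinearMap.funLeft ℝ ℝ g).comp V.subtype with hfdef
  have hinjf : Function.Injective f := by
    rw [← LinearMap.ker_eq_bot]
    apply (Submodule.eq_bot_iff _).mpr
    rintro ⟨v, hv⟩ hfv
    rw [LinearMap.mem_ker] at hfv
    have hv0 : v = 0 := by
      apply hkerV v hv
      intro p
      exact congrFun hfv p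
    exact Subtype.ext hv0
  have hmapeq : Submodule.map (LinearMap.funLeft ℝ ℝ g) V = LinearMap.range f := by
    rw [hfdef, LinearMap.range_comp, Submodule.range_subtype]
  have hrank : (tail2 Pm).rank = Module.finrank ℝ V := by
    rw [Matrix.rank, htail, LinearMap.range_comp, hmapeq]
    exact (LinearEquiv.finrank_eq (LinearEquiv.ofInjective f hinjf)).symm
  rw [hrank]
  rw [show Module.finrank ℝ V = T * Nu from by rw [hVK]; exact hker, Nat.mul_comm]
end

section
/- Localized trajectory set characterization (dynamics-first): assume there exists Φ satisfying both Z_{AB}Φ=[I;0] and the locality constraint (vec(Φ₂))_𝔏 = 0, where Φ₂ := Φ_{Nx+1:,:}. Then Y_L(x0) = {Z_p x0 + Z_h X F†g + Z_h X (I - F†F)μ : μ free}, where F := (Z_h^{blk})_{𝔏,:} and g := -(vec(Z_p))_𝔏, and dim(Y_L(x0)) = rank(Z_h X (I - F†F)). -/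
open Matrix

/-- Column-wise vectorization: `vec(M) (j, i) = M i j`. -/
def vecc {r c : Type*} (M : Matrix r c ℝ) : c × r → ℝ := fun q => M q.2 q.1

/-- Block-diagonal augmentation `M^blk := blkdiag(M, …, M)`, one copy of `M` per
element of the column-index type `c`, so that `vec(M Λ) = M^blk vec(Λ)`. -/
def blkaug (c : Type*) [DecidableEq c] {r r' : Type*} (M : Matrix r r' ℝ) :
    Matrix (c × r) (c × r') ℝ :=
  Matrix.of fun q p => if q.1 = p.1 then M q.2 p.2 else 0

/-- Augmented state matrix `X(x0) := [(x0)_1 I, …, (x0)_{Nx} I]` (identity blocks of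
size `r`), satisfying `Λ x0 = X(x0) vec(Λ)`. -/
def augX {Nx : ℕ} (r : Type*) [DecidableEq r] (x0 : Fin Nx → ℝ) :
    Matrix r (Fin Nx × r) ℝ :=
  Matrix.of fun i q => if i = q.2 then x0 q.1 else 0

section Helpers

variable {Nx Nu T : ℕ}

lemma tail2_add {c : Type*} (M N : Matrix ((Fin (T+1) × Fin Nx) ⊕ (Fin T × Fin Nu)) c ℝ) :
    tail2 (M + N) = tail2 M + tail2 N := by
  ext p j; rcases p with ⟨t, i⟩ | q <;> rfl

lemma tail2_mul {c c' : Type*} [Fintype c]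
    (M : Matrix ((Fin (T+1) × Fin Nx) ⊕ (Fin T × Fin Nu)) c ℝ) (N : Matrix c c' ℝ) :
    tail2 (M * N) = tail2 M * N := by
  ext p j; rcases p with ⟨t, i⟩ | q <;> simp [tail2, Matrix.mul_apply]

lemma vecc_add {r c : Type*} (M N : Matrix r c ℝ) :
    vecc (M + N) = vecc M + vecc N := rfl

lemma vecc_mul {r c d : Type*} [Fintype c] [Fintype d] [DecidableEq d]
    (M : Matrix r c ℝ) (Λ : Matrix c d ℝ) :
    vecc (M * Λ) = blkaug d M *ᵥ vecc Λ := by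
  ext ⟨j, i⟩
  simp [vecc, blkaug, Matrix.mul_apply, Matrix.mulVec, dotProduct,
    Fintype.sum_prod_type, ite_mul]

lemma mulVec_x0 {r : Type*} [Fintype r] [DecidableEq r] {Nx : ℕ}
    (Λ : Matrix r (Fin Nx) ℝ) (x0 : Fin Nx → ℝ) :
    Λ *ᵥ x0 = augX r x0 *ᵥ vecc Λ := by
  ext i
  simp [augX, vecc, Matrix.mulVec, dotProduct, Fintype.sum_prod_type, ite_mul,
    mul_comm]

/-- vectorSpan of an affine image of a surjective-parameterized set. -/
lemma vectorSpan_affine_set {n m : Type*} [Fintype n] [Fintype m] [DecidableEq n]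
    (c : m → ℝ) (M : Matrix m n ℝ) :
    vectorSpan ℝ {y : m → ℝ | ∃ μ : n → ℝ, y = c + M *ᵥ μ} =
      LinearMap.range M.mulVecLin := by
  have hset : ({y : m → ℝ | ∃ μ : n → ℝ, y = c + M *ᵥ μ} -ᵥ
      {y : m → ℝ | ∃ μ : n → ℝ, y = c + M *ᵥ μ}) =
      (LinearMap.range M.mulVecLin : Set (m → ℝ)) := by
    ext z
    constructor
    · rintro ⟨a, ⟨μ₁, rfl⟩, b, ⟨μ₂, rfl⟩, rfl⟩
      exact ⟨μ₁ - μ₂, by simp [Matrix.mulVec_sub]⟩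
    · rintro ⟨μ, rfl⟩
      refine ⟨c + M *ᵥ μ, ⟨μ, rfl⟩, c + M *ᵥ 0, ⟨0, rfl⟩, ?_⟩
      simp [Matrix.mulVecLin]
  rw [vectorSpan, hset, Submodule.span_eq]

end Helpers

/-- dynamics-first localized trajectory set: if some `Φ` satisfies both
the dynamics constraint `Z_{AB}Φ = [I;0]` and the locality constraint
`(vec(Φ₂))_𝔏 = 0`, then with `F := (Z_h^blk)_{𝔏,:}` and `g := -(vec Z_p)_𝔏`,
`𝒴_L(x0) = {Z_p x0 + Z_h X F†g + Z_h X (I - F†F) μ : μ free}` and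
`dim 𝒴_L(x0) = rank(Z_h X (I - F†F))`. -/
theorem localized_trajSet_dynamics_first {Nx Nu T : ℕ}
    (A : Matrix (Fin Nx) (Fin Nx) ℝ) (B : Matrix (Fin Nx) (Fin Nu) ℝ)
    (Zdag : Matrix ((Fin (T+1) × Fin Nx) ⊕ (Fin T × Fin Nu)) (Fin (T+1) × Fin Nx) ℝ)
    (hMP : IsMoorePenrose (ZAB A B T) Zdag)
    (x0 : Fin Nx → ℝ)
    (𝔏 : Finset (Fin Nx × ((Fin T × Fin Nx) ⊕ (Fin T × Fin Nu))))
    -- Z_p and Z_h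
    (Zp : Matrix ((Fin T × Fin Nx) ⊕ (Fin T × Fin Nu)) (Fin Nx) ℝ)
    (hZp : Zp = tail2 (Zdag * rhsIO Nx T))
    (Zh : Matrix ((Fin T × Fin Nx) ⊕ (Fin T × Fin Nu))
      ((Fin (T+1) × Fin Nx) ⊕ (Fin T × Fin Nu)) ℝ)
    (hZh : Zh = tail2 (1 - Zdag * ZAB A B T))
    -- F := (Z_h^blk)_{𝔏,:} and g := -(vec Z_p)_𝔏
    (F : Matrix ↥𝔏 (Fin Nx × ((Fin (T+1) × Fin Nx) ⊕ (Fin T × Fin Nu))) ℝ)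
    (hF : F = Matrix.of fun l q => blkaug (Fin Nx) Zh l.1 q)
    (g : ↥𝔏 → ℝ) (hg : g = fun l => -(vecc Zp l.1))
    (Fdag : Matrix (Fin Nx × ((Fin (T+1) × Fin Nx) ⊕ (Fin T × Fin Nu))) ↥𝔏 ℝ)
    (hMPF : IsMoorePenrose F Fdag)
    -- feasibility of dynamics together with locality
    (hfeas : ∃ Φ : Matrix ((Fin (T+1) × Fin Nx) ⊕ (Fin T × Fin Nu)) (Fin Nx) ℝ,
      ZAB A B T * Φ = rhsIO Nx T ∧ ∀ l ∈ 𝔏, vecc (tail2 Φ) l = 0) :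
    {y | ∃ Φ : Matrix ((Fin (T+1) × Fin Nx) ⊕ (Fin T × Fin Nu)) (Fin Nx) ℝ,
        ZAB A B T * Φ = rhsIO Nx T ∧ (∀ l ∈ 𝔏, vecc (tail2 Φ) l = 0) ∧
        y = tail2 Φ *ᵥ x0} =
      {y | ∃ μ : Fin Nx × ((Fin (T+1) × Fin Nx) ⊕ (Fin T × Fin Nu)) → ℝ,
        y = Zp *ᵥ x0 + (Zh * augX ((Fin (T+1) × Fin Nx) ⊕ (Fin T × Fin Nu)) x0) *ᵥ (Fdag *ᵥ g)
          + ((Zh * augX ((Fin (T+1) × Fin Nx) ⊕ (Fin T × Fin Nu)) x0) * (1 - Fdag * F)) *ᵥ μ} ∧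
    Module.finrank ℝ (vectorSpan ℝ
        {y | ∃ Φ : Matrix ((Fin (T+1) × Fin Nx) ⊕ (Fin T × Fin Nu)) (Fin Nx) ℝ,
          ZAB A B T * Φ = rhsIO Nx T ∧ (∀ l ∈ 𝔏, vecc (tail2 Φ) l = 0) ∧
          y = tail2 Φ *ᵥ x0}) =
      ((Zh * augX ((Fin (T+1) × Fin Nx) ⊕ (Fin T × Fin Nu)) x0) * (1 - Fdag * F)).rank := by
  set Z := ZAB A B T with hZdef
  -- tail2 of any solution of the dynamics
  have htail : ∀ Φ : Matrix ((Fin (T+1) × Fin Nx) ⊕ (Fin T × Fin Nu)) (Fin Nx) ℝ,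
      Z * Φ = rhsIO Nx T → tail2 Φ = Zp + Zh * Φ := by
    intro Φ hΦ
    have hrep : Zdag * rhsIO Nx T + (1 - Zdag * Z) * Φ = Φ := by
      rw [← hΦ, Matrix.sub_mul, Matrix.one_mul, ← Matrix.mul_assoc]
      abel
    calc tail2 Φ = tail2 (Zdag * rhsIO Nx T + (1 - Zdag * Z) * Φ) := by rw [hrep]
      _ = Zp + Zh * Φ := by rw [tail2_add, tail2_mul (1 - Zdag * Z) Φ, ← hZp, ← hZh]
  have hFeval : ∀ (v : Fin Nx × ((Fin (T+1) × Fin Nx) ⊕ (Fin T × Fin Nu)) → ℝ)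
      (l : ↥𝔏), (F *ᵥ v) l = (blkaug (Fin Nx) Zh *ᵥ v) l.1 := by
    intro v l; rw [hF]; rfl
  -- locality ↔ the linear constraint F vec(Φ) = g
  have hFg : ∀ Φ : Matrix ((Fin (T+1) × Fin Nx) ⊕ (Fin T × Fin Nu)) (Fin Nx) ℝ,
      Z * Φ = rhsIO Nx T →
      ((∀ l ∈ 𝔏, vecc (tail2 Φ) l = 0) ↔ F *ᵥ vecc Φ = g) := by
    intro Φ hΦ
    have hv : vecc (tail2 Φ) = vecc Zp + blkaug (Fin Nx) Zh *ᵥ vecc Φ := by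
      rw [htail Φ hΦ, vecc_add, vecc_mul]
    constructor
    · intro h
      funext l
      have h1 := h l.1 l.2
      rw [hv, Pi.add_apply] at h1
      simp only [hFeval, hg]
      linarith
    · intro h l hl
      have h1 : (blkaug (Fin Nx) Zh *ᵥ vecc Φ) l = -(vecc Zp l) := by
        simpa [hFeval, hg] using congrFun h ⟨l, hl⟩
      rw [hv, Pi.add_apply, h1]
      ring
  have htraj : ∀ Φ : Matrix ((Fin (T+1) × Fin Nx) ⊕ (Fin T × Fin Nu)) (Fin Nx) ℝ,
      Z * Φ = rhsIO Nx T → tail2 Φ *ᵥ x0 =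
        Zp *ᵥ x0 + (Zh * augX ((Fin (T+1) × Fin Nx) ⊕ (Fin T × Fin Nu)) x0) *ᵥ vecc Φ := by
    intro Φ hΦ
    rw [htail Φ hΦ, Matrix.add_mulVec, ← Matrix.mulVec_mulVec, mulVec_x0 Φ x0,
      Matrix.mulVec_mulVec]
  obtain ⟨Φ₀, hd0, hl0⟩ := hfeas
  have hg0 : F *ᵥ vecc Φ₀ = g := (hFg Φ₀ hd0).mp hl0
  have hFFg : F *ᵥ (Fdag *ᵥ g) = g := by
    calc F *ᵥ (Fdag *ᵥ g) = (F * Fdag * F) *ᵥ vecc Φ₀ := by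
          rw [← hg0, Matrix.mulVec_mulVec, Matrix.mulVec_mulVec]
      _ = g := by rw [hMPF.1, hg0]
  have hZZr : Z * (Zdag * rhsIO Nx T) = rhsIO Nx T := by
    rw [← hd0, ← Matrix.mul_assoc, ← Matrix.mul_assoc, hMP.1]
  -- the set equality
  have hsets : {y | ∃ Φ : Matrix ((Fin (T+1) × Fin Nx) ⊕ (Fin T × Fin Nu)) (Fin Nx) ℝ,
        Z * Φ = rhsIO Nx T ∧ (∀ l ∈ 𝔏, vecc (tail2 Φ) l = 0) ∧
        y = tail2 Φ *ᵥ x0} =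
      {y | ∃ μ : Fin Nx × ((Fin (T+1) × Fin Nx) ⊕ (Fin T × Fin Nu)) → ℝ,
        y = Zp *ᵥ x0 + (Zh * augX ((Fin (T+1) × Fin Nx) ⊕ (Fin T × Fin Nu)) x0) *ᵥ (Fdag *ᵥ g)
          + ((Zh * augX ((Fin (T+1) × Fin Nx) ⊕ (Fin T × Fin Nu)) x0) * (1 - Fdag * F)) *ᵥ μ} := by
    ext y
    constructor
    · rintro ⟨Φ, hd, hl, rfl⟩
      refine ⟨vecc Φ, ?_⟩
      have hFv : F *ᵥ vecc Φ = g := (hFg Φ hd).mp hl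
      have key : Fdag *ᵥ g + (1 - Fdag * F) *ᵥ vecc Φ = vecc Φ := by
        rw [Matrix.sub_mulVec, Matrix.one_mulVec, ← Matrix.mulVec_mulVec, hFv]
        abel
      calc tail2 Φ *ᵥ x0
          = Zp *ᵥ x0 + (Zh * augX ((Fin (T+1) × Fin Nx) ⊕ (Fin T × Fin Nu)) x0) *ᵥ vecc Φ :=
            htraj Φ hd
        _ = Zp *ᵥ x0 + (Zh * augX ((Fin (T+1) × Fin Nx) ⊕ (Fin T × Fin Nu)) x0) *ᵥ
              (Fdag *ᵥ g + (1 - Fdag * F) *ᵥ vecc Φ) := by rw [key]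
        _ = Zp *ᵥ x0 + (Zh * augX ((Fin (T+1) × Fin Nx) ⊕ (Fin T × Fin Nu)) x0) *ᵥ (Fdag *ᵥ g)
              + ((Zh * augX ((Fin (T+1) × Fin Nx) ⊕ (Fin T × Fin Nu)) x0) * (1 - Fdag * F)) *ᵥ
                vecc Φ := by
            rw [Matrix.mulVec_add, Matrix.mulVec_mulVec, Matrix.mulVec_mulVec, add_assoc]
    · rintro ⟨μ, rfl⟩
      set v := Fdag *ᵥ g + (1 - Fdag * F) *ᵥ μ with hvdef
      set Λ : Matrix ((Fin (T+1) × Fin Nx) ⊕ (Fin T × Fin Nu)) (Fin Nx) ℝ :=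
        Matrix.of (fun p j => v (j, p)) with hΛdef
      have hveccΛ : vecc Λ = v := rfl
      set Φ := Zdag * rhsIO Nx T + (1 - Zdag * Z) * Λ with hΦdef
      have hd : Z * Φ = rhsIO Nx T := by
        have hz : Z * (1 - Zdag * Z) = 0 := by
          rw [Matrix.mul_sub, Matrix.mul_one, ← Matrix.mul_assoc, hMP.1, sub_self]
        rw [hΦdef, Matrix.mul_add, hZZr, ← Matrix.mul_assoc, hz, Matrix.zero_mul,
          add_zero]
      have htail2 : tail2 Φ = Zp + Zh * Λ := by
        rw [hΦdef, tail2_add, tail2_mul (1 - Zdag * Z) Λ, ← hZp, ← hZh]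
      have hFvv : F *ᵥ v = g := by
        have h2 : F * (1 - Fdag * F) = 0 := by
          rw [Matrix.mul_sub, Matrix.mul_one, ← Matrix.mul_assoc, hMPF.1, sub_self]
        rw [hvdef, Matrix.mulVec_add, hFFg, Matrix.mulVec_mulVec, h2,
          Matrix.zero_mulVec, add_zero]
      have hloc : ∀ l ∈ 𝔏, vecc (tail2 Φ) l = 0 := by
        intro l hl
        have h1 : vecc (tail2 Φ) = vecc Zp + blkaug (Fin Nx) Zh *ᵥ v := by
          rw [htail2, vecc_add, vecc_mul, hveccΛ]
        have h2 : (blkaug (Fin Nx) Zh *ᵥ v) l = -(vecc Zp l) := by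
          simpa [hFeval, hg] using congrFun hFvv ⟨l, hl⟩
        rw [h1, Pi.add_apply, h2]
        ring
      refine ⟨Φ, hd, hloc, ?_⟩
      calc Zp *ᵥ x0 + (Zh * augX ((Fin (T+1) × Fin Nx) ⊕ (Fin T × Fin Nu)) x0) *ᵥ (Fdag *ᵥ g)
              + ((Zh * augX ((Fin (T+1) × Fin Nx) ⊕ (Fin T × Fin Nu)) x0) * (1 - Fdag * F)) *ᵥ μ
          = Zp *ᵥ x0 + (Zh * augX ((Fin (T+1) × Fin Nx) ⊕ (Fin T × Fin Nu)) x0) *ᵥ v := by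
            rw [hvdef, Matrix.mulVec_add, Matrix.mulVec_mulVec, Matrix.mulVec_mulVec,
              add_assoc]
        _ = tail2 Φ *ᵥ x0 := by
            have hy : tail2 Φ *ᵥ x0 = Zp *ᵥ x0 +
                (Zh * augX ((Fin (T+1) × Fin Nx) ⊕ (Fin T × Fin Nu)) x0) *ᵥ v := by
              rw [htail2, Matrix.add_mulVec, ← Matrix.mulVec_mulVec, mulVec_x0 Λ x0,
                hveccΛ, Matrix.mulVec_mulVec]
            exact hy.symm
  refine ⟨hsets, ?_⟩
  rw [hsets, vectorSpan_affine_set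
    (Zp *ᵥ x0 + (Zh * augX ((Fin (T+1) × Fin Nx) ⊕ (Fin T × Fin Nu)) x0) *ᵥ (Fdag *ᵥ g))
    ((Zh * augX ((Fin (T+1) × Fin Nx) ⊕ (Fin T × Fin Nu)) x0) * (1 - Fdag * F)), Matrix.rank]
end

section
/- Locality-first characterization: assume there exists Φ satisfying Z_{AB}Φ=[I;0] and Φ ∈ L, and let 𝔐 be the support indices of vec(Φ) allowed nonzero by L. Then Y_L(x0) = {(X₂)_{:,𝔐} H†k + (X₂)_{:,𝔐}(I - H†H)γ : γ free}, where X₂ := X_{Nx+1:,:}, H := (Z_{AB}^{blk})_{:,𝔐}, k := vec([I;0]); and dim(Y_L(x0)) = rank((X₂)_{:,𝔐}(I - H†H)). -/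
open Matrix

section Aux
open Matrix
variable {Nx Nu T : ℕ}

lemma restrict_mulVec {r c : Type*} [Fintype r] [Fintype c] [DecidableEq c]
    (G : Matrix r c ℝ) (S : Finset c) (v : c → ℝ) (hv : ∀ p ∉ S, v p = 0) :
    (Matrix.of fun i (m : ↥S) => G i m.1) *ᵥ (fun m : ↥S => v m.1) = G *ᵥ v := by
  funext i
  simp only [Matrix.mulVec, dotProduct, Matrix.of_apply]
  rw [Finset.sum_coe_sort S (fun q => G i q * v q)]
  exact Finset.sum_subset (Finset.subset_univ S) (by intro q _ hq; simp [hv q hq])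

lemma blkaug_mulVec {r r' : Type*} [Fintype r] [Fintype r']
    (M : Matrix r r' ℝ) (Φ : Matrix r' (Fin Nx) ℝ) :
    blkaug (Fin Nx) M *ᵥ vecc Φ = vecc (M * Φ) := by
  funext p
  simp only [Matrix.mulVec, dotProduct, blkaug, vecc, Matrix.of_apply, Matrix.mul_apply]
  rw [Fintype.sum_prod_type]
  simp [Finset.sum_ite_eq, ite_mul, Finset.mul_sum]

lemma augX_mulVec {r : Type*} [Fintype r] [DecidableEq r]
    (x0 : Fin Nx → ℝ) (Λ : Matrix r (Fin Nx) ℝ) :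
    augX r x0 *ᵥ vecc Λ = Λ *ᵥ x0 := by
  funext i
  simp only [Matrix.mulVec, dotProduct, augX, vecc, Matrix.of_apply]
  rw [Fintype.sum_prod_type]
  simp [Finset.mul_sum, mul_comm]

lemma tail2_augX_mulVec (x0 : Fin Nx → ℝ)
    (Φ : Matrix ((Fin (T+1) × Fin Nx) ⊕ (Fin T × Fin Nu)) (Fin Nx) ℝ) :
    tail2 (augX ((Fin (T+1) × Fin Nx) ⊕ (Fin T × Fin Nu)) x0) *ᵥ vecc Φ
      = tail2 Φ *ᵥ x0 := by
  have h := augX_mulVec x0 Φ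
  funext p
  cases p with
  | inl q =>
    have := congrFun h (Sum.inl (q.1.succ, q.2))
    simpa [tail2, Matrix.mulVec, dotProduct] using this
  | inr q =>
    have := congrFun h (Sum.inr q)
    simpa [tail2, Matrix.mulVec, dotProduct] using this

lemma sol_set {m n : Type*} [Fintype m] [Fintype n] [DecidableEq n]
    (H : Matrix m n ℝ) (Hdag : Matrix n m ℝ) (hMP : IsMoorePenrose H Hdag)
    (k : m → ℝ) (z0 : n → ℝ) (h0 : H *ᵥ z0 = k) (z : n → ℝ) :
    H *ᵥ z = k ↔ ∃ γ, z = Hdag *ᵥ k + (1 - Hdag * H) *ᵥ γ := by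
  obtain ⟨h1, h2, h3, h4⟩ := hMP
  constructor
  · intro hz
    refine ⟨z, ?_⟩
    rw [sub_mulVec, one_mulVec, ← Matrix.mulVec_mulVec, hz]
    abel
  · rintro ⟨γ, rfl⟩
    rw [Matrix.mulVec_add, Matrix.mulVec_mulVec, Matrix.mulVec_mulVec, Matrix.mul_sub, Matrix.mul_one,
      ← Matrix.mul_assoc, h1, sub_self, Matrix.zero_mulVec, add_zero, ← h0]
    simp only [Matrix.mulVec_mulVec, ← Matrix.mul_assoc, h1]

end Aux

/-- locality-first localized trajectory set: with support indices `𝔐`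
of `vec(Φ)`, `H := (Z_{AB}^blk)_{:,𝔐}`, `k := vec([I;0])`, and `X₂ := X_{Nx+1:,:}`,
if some `Φ` satisfies both the dynamics and locality constraints, then
`𝒴_L(x0) = {(X₂)_{:,𝔐} H†k + (X₂)_{:,𝔐}(I - H†H)γ : γ free}` and
`dim 𝒴_L(x0) = rank((X₂)_{:,𝔐}(I - H†H))`. -/
theorem localized_trajSet_locality_first {Nx Nu T : ℕ}
    (A : Matrix (Fin Nx) (Fin Nx) ℝ) (B : Matrix (Fin Nx) (Fin Nu) ℝ)
    (x0 : Fin Nx → ℝ)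
    (𝔐 : Finset (Fin Nx × ((Fin (T+1) × Fin Nx) ⊕ (Fin T × Fin Nu))))
    -- H := (Z_{AB}^blk)_{:,𝔐} and k := vec([I;0])
    (H : Matrix (Fin Nx × (Fin (T+1) × Fin Nx)) ↥𝔐 ℝ)
    (hH : H = Matrix.of fun p m => blkaug (Fin Nx) (ZAB A B T) p m.1)
    (k : Fin Nx × (Fin (T+1) × Fin Nx) → ℝ) (hk : k = vecc (rhsIO Nx T))
    -- X₂ restricted to the columns 𝔐
    (X2M : Matrix ((Fin T × Fin Nx) ⊕ (Fin T × Fin Nu)) ↥𝔐 ℝ)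
    (hX2M : X2M = Matrix.of fun r m =>
      tail2 (augX ((Fin (T+1) × Fin Nx) ⊕ (Fin T × Fin Nu)) x0) r m.1)
    (Hdag : Matrix ↥𝔐 (Fin Nx × (Fin (T+1) × Fin Nx)) ℝ)
    (hMPH : IsMoorePenrose H Hdag)
    (hfeas : ∃ Φ : Matrix ((Fin (T+1) × Fin Nx) ⊕ (Fin T × Fin Nu)) (Fin Nx) ℝ,
      ZAB A B T * Φ = rhsIO Nx T ∧ ∀ p, p ∉ 𝔐 → vecc Φ p = 0) :
    {y | ∃ Φ : Matrix ((Fin (T+1) × Fin Nx) ⊕ (Fin T × Fin Nu)) (Fin Nx) ℝ,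
        ZAB A B T * Φ = rhsIO Nx T ∧ (∀ p, p ∉ 𝔐 → vecc Φ p = 0) ∧
        y = tail2 Φ *ᵥ x0} =
      {y | ∃ γ : ↥𝔐 → ℝ,
        y = X2M *ᵥ (Hdag *ᵥ k) + (X2M * (1 - Hdag * H)) *ᵥ γ} ∧
    Module.finrank ℝ (vectorSpan ℝ
        {y | ∃ Φ : Matrix ((Fin (T+1) × Fin Nx) ⊕ (Fin T × Fin Nu)) (Fin Nx) ℝ,
          ZAB A B T * Φ = rhsIO Nx T ∧ (∀ p, p ∉ 𝔐 → vecc Φ p = 0) ∧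
          y = tail2 Φ *ᵥ x0}) =
      (X2M * (1 - Hdag * H)).rank := by
  subst hH hk hX2M
  obtain ⟨Φ0, hc0, hs0⟩ := hfeas
  set Hm : Matrix (Fin Nx × (Fin (T+1) × Fin Nx)) ↥𝔐 ℝ :=
    Matrix.of fun p m => blkaug (Fin Nx) (ZAB A B T) p m.1 with hHm
  set X2 : Matrix ((Fin T × Fin Nx) ⊕ (Fin T × Fin Nu)) ↥𝔐 ℝ :=
    Matrix.of fun r m =>
      tail2 (augX ((Fin (T+1) × Fin Nx) ⊕ (Fin T × Fin Nu)) x0) r m.1 with hX2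
  have hGH : ∀ (Φ : Matrix ((Fin (T+1) × Fin Nx) ⊕ (Fin T × Fin Nu)) (Fin Nx) ℝ),
      (∀ p ∉ 𝔐, vecc Φ p = 0) →
      Hm *ᵥ (fun m : ↥𝔐 => vecc Φ m.1) = vecc (ZAB A B T * Φ) := by
    intro Φ hs
    rw [hHm, restrict_mulVec _ _ _ hs, blkaug_mulVec]
  have hXH : ∀ (Φ : Matrix ((Fin (T+1) × Fin Nx) ⊕ (Fin T × Fin Nu)) (Fin Nx) ℝ),
      (∀ p ∉ 𝔐, vecc Φ p = 0) →
      X2 *ᵥ (fun m : ↥𝔐 => vecc Φ m.1) = tail2 Φ *ᵥ x0 := by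
    intro Φ hs
    rw [hX2, restrict_mulVec _ _ _ hs, tail2_augX_mulVec]
  have hveccinj : ∀ (M N : Matrix (Fin (T+1) × Fin Nx) (Fin Nx) ℝ),
      vecc M = vecc N → M = N := by
    intro M N h
    ext i j
    exact congrFun h (j, i)
  have h0 : Hm *ᵥ (fun m : ↥𝔐 => vecc Φ0 m.1) = vecc (rhsIO Nx T) := by
    rw [hGH Φ0 hs0, hc0]
  have hsol := fun z => sol_set Hm Hdag hMPH (vecc (rhsIO Nx T)) _ h0 z
  have hset : {y | ∃ Φ : Matrix ((Fin (T+1) × Fin Nx) ⊕ (Fin T × Fin Nu)) (Fin Nx) ℝ,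
        ZAB A B T * Φ = rhsIO Nx T ∧ (∀ p, p ∉ 𝔐 → vecc Φ p = 0) ∧
        y = tail2 Φ *ᵥ x0} =
      {y | ∃ γ : ↥𝔐 → ℝ,
        y = X2 *ᵥ (Hdag *ᵥ vecc (rhsIO Nx T)) + (X2 * (1 - Hdag * Hm)) *ᵥ γ} := by
    ext y
    constructor
    · rintro ⟨Φ, hc, hs, rfl⟩
      have hz : Hm *ᵥ (fun m : ↥𝔐 => vecc Φ m.1) = vecc (rhsIO Nx T) := by
        rw [hGH Φ hs, hc]
      obtain ⟨γ, hγ⟩ := (hsol _).1 hz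
      refine ⟨γ, ?_⟩
      rw [← hXH Φ hs, hγ, Matrix.mulVec_add, Matrix.mulVec_mulVec, Matrix.mulVec_mulVec]
    · rintro ⟨γ, rfl⟩
      set z : ↥𝔐 → ℝ := Hdag *ᵥ vecc (rhsIO Nx T) + (1 - Hdag * Hm) *ᵥ γ with hzdef
      have hz : Hm *ᵥ z = vecc (rhsIO Nx T) := (hsol z).2 ⟨γ, rfl⟩
      set Φz : Matrix ((Fin (T+1) × Fin Nx) ⊕ (Fin T × Fin Nu)) (Fin Nx) ℝ :=
        Matrix.of fun p j => if h : (j, p) ∈ 𝔐 then z ⟨(j, p), h⟩ else 0 with hΦz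
      have hsupp : ∀ p ∉ 𝔐, vecc Φz p = 0 := by
        intro p hp
        simp only [vecc, hΦz, Matrix.of_apply]
        rw [dif_neg]
        simpa using hp
      have hzeq : (fun m : ↥𝔐 => vecc Φz m.1) = z := by
        funext m
        simp only [vecc, hΦz, Matrix.of_apply]
        rw [dif_pos (by exact m.2)]
      refine ⟨Φz, ?_, hsupp, ?_⟩
      · exact hveccinj (ZAB A B T * Φz) (rhsIO Nx T)
          (by rw [← hGH Φz hsupp, hzeq, hz])
      · rw [← hXH Φz hsupp, hzeq, hzdef, Matrix.mulVec_add, Matrix.mulVec_mulVec, Matrix.mulVec_mulVec]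
  refine ⟨hset, ?_⟩
  rw [hset]
  set c := X2 *ᵥ (Hdag *ᵥ vecc (rhsIO Nx T)) with hc
  set M := X2 * (1 - Hdag * Hm) with hM
  have hvs : vectorSpan ℝ {y | ∃ γ : ↥𝔐 → ℝ, y = c + M *ᵥ γ}
      = LinearMap.range M.mulVecLin := by
    rw [vectorSpan_def]
    have hsub : ({y | ∃ γ : ↥𝔐 → ℝ, y = c + M *ᵥ γ} -ᵥ
        {y | ∃ γ : ↥𝔐 → ℝ, y = c + M *ᵥ γ})
        = (LinearMap.range M.mulVecLin : Set _) := by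
      ext w
      constructor
      · rintro ⟨a, ⟨γ1, rfl⟩, b, ⟨γ2, rfl⟩, rfl⟩
        refine ⟨γ1 - γ2, ?_⟩
        simp [Matrix.mulVec_sub, vsub_eq_sub]
      · rintro ⟨γ, rfl⟩
        refine ⟨c + M *ᵥ γ, ⟨γ, rfl⟩, c + M *ᵥ 0, ⟨0, rfl⟩, ?_⟩
        simp [Matrix.mulVec_zero, vsub_eq_sub]
    rw [hsub, Submodule.span_eq]
  rw [hvs]
  rfl
end
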